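/- Let F be a field, d ≥ 3, n ≥ 1, and let T be a d-mode tensor over F with n variables per mode. Then the d-th Kronecker power of T is a restriction of the graph tensor of the complete graph K_d with length parameter n²: T^{⊗d} ≤ T_{K_d,n²}. -/

import Mathlib

open Classical Finset MvPolynomial

/-- A multigraph on the ambient vertex type `V`: a finite edge type together with an
assignment of an unordered pair of distinct end-vertices to every edge.
Parallel edges are allowed. -/
structure Multigraph (V : Type) where
  E : Type
  [decE : DecidableEq E]
  [fintE : Fintype E]
  ends : E → Sym2 V
  loopless : ∀ e, ¬ (ends e).IsDiag

attribute [instance] Multigraph.decE Multigraph.fintE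

namespace Multigraph

/-- The set (type) of edges incident with the vertex `v`. -/
def Inc {V : Type} (G : Multigraph V) (v : V) : Type := {e : G.E // v ∈ G.ends e}

noncomputable instance {V : Type} (G : Multigraph V) (v : V) : Fintype (G.Inc v) :=
  Fintype.ofInjective (fun e : G.Inc v => e.1) Subtype.val_injective

noncomputable instance {V : Type} (G : Multigraph V) (v : V) : DecidableEq (G.Inc v) :=
  Classical.decEq _

end Multigraph

/-- The graph tensor `T_{G,n}`, represented by its array of coefficients:
it is the set-multilinear polynomial with one mode per vertex `v`, whose mode-`v`
variables are indexed by the functions `g : I_G(v) → Fin n`, and which equals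
`∑_{f : E(G) → Fin n} ∏_{v} x^{(v)}_{f | I_G(v)}`.  Hence the coefficient of the
set-multilinear monomial `∏_v x^{(v)}_{a v}` is the number of `f : E(G) → Fin n`
whose restriction to `I_G(v)` equals `a v` for every `v`. -/
noncomputable def gTensor (F : Type) [Field F] {V : Type} (G : Multigraph V) (n : ℕ) :
    (∀ v : V, G.Inc v → Fin n) → F :=
  fun a => ∑ f : G.E → Fin n,
    if ∀ (v : V) (e : G.Inc v), a v e = f e.1 then 1 else 0

/-- Two tensors (given by their coefficient arrays, with modes indexed by `ι` resp. `κ`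
and with mode variable sets `X i` resp. `Y j`) are equivalent if one is obtained from the
other by a bijective renaming of variables that is bijective on modes. -/
def TEquiv {F : Type} [Field F] {ι κ : Type} {X : ι → Type} {Y : κ → Type}
    (S : (∀ i, X i) → F) (T : (∀ j, Y j) → F) : Prop :=
  ∃ (σ : ι ≃ κ) (e : ∀ i, X i ≃ Y (σ i)),
    ∀ b : ∀ j, Y j, T b = S fun i => (e i).symm (b (σ i))

/-- The Kronecker product of two tensors with the same mode index type `ι`:
the `i`-th mode of `S ⊗ T` has variable set `X i × Y i`, and the coefficients multiply. -/
def kron {F : Type} [Field F] {ι : Type} {X Y : ι → Type}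
    (S : (∀ i, X i) → F) (T : (∀ i, Y i) → F) : (∀ i, X i × Y i) → F :=
  fun c => S (fun i => (c i).1) * T (fun i => (c i).2)

/-- The `k`-th Kronecker power of a `d`-mode tensor with `n` variables per mode. -/
def kronPow {F : Type} [Field F] {d n : ℕ} (T : (Fin d → Fin n) → F) (k : ℕ) :
    (Fin d → (Fin k → Fin n)) → F :=
  fun a => ∏ s : Fin k, T fun i => a i s

/-- The rank of a tensor: the least `r` such that `T` is the sum of `r` products of
linear forms, one linear form per mode (a linear form on mode `i` is recorded by its
coefficient vector `X i → F`). -/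
noncomputable def tensorRank {F : Type} [Field F] {ι : Type} [Fintype ι] {X : ι → Type}
    (T : (∀ i, X i) → F) : ℕ :=
  sInf {r : ℕ | ∃ ℓ : Fin r → (∀ i, X i → F),
    ∀ a : ∀ i, X i, T a = ∑ s : Fin r, ∏ i, ℓ s i (a i)}

/-- `S` is a restriction of `T` (written `S ≤ T`): there is a bijection `σ` between the
modes of `T` and the modes of `S` such that `S` is obtained from `T` by substituting for
each variable of mode `j` of `T` a linear form (recorded by its coefficient vector `M j y`)
in the variables of mode `σ j` of `S`. -/
def Restrict {F : Type} [Field F] {ι κ : Type} [Fintype κ] [DecidableEq κ]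
    {X : ι → Type} {Y : κ → Type} [∀ j, Fintype (Y j)]
    (S : (∀ i, X i) → F) (T : (∀ j, Y j) → F) : Prop :=
  ∃ (σ : κ ≃ ι) (M : ∀ j, Y j → X (σ j) → F),
    ∀ a : ∀ i, X i, S a = ∑ b : ∀ j, Y j, T b * ∏ j, M j (b j) (a (σ j))

/-- The tensor, viewed as an honest (set-multilinear) polynomial in the variables
`Σ i, X i`. -/
noncomputable def toPoly {F : Type} [Field F] {ι : Type} [Fintype ι] [DecidableEq ι]
    {X : ι → Type} [∀ i, Fintype (X i)] (T : (∀ i, X i) → F) :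
    MvPolynomial (Σ i, X i) F :=
  ∑ a : ∀ i, X i, MvPolynomial.C (T a) * ∏ i, MvPolynomial.X (⟨i, a i⟩ : Σ i, X i)

/-- `S` is a simple projection of `T` (written `S ≤ₛ T`): `S` is obtained from `T` by a
substitution assigning to each variable of `T` either a scalar or a variable of `S`, in
such a way that the image of the variable set of each mode of `T` meets the variable set
of at most one mode of `S`. -/
def SimpleProj {F : Type} [Field F] {ι κ : Type} [Fintype ι] [DecidableEq ι]
    [Fintype κ] [DecidableEq κ] {X : ι → Type} {Y : κ → Type}
    [∀ i, Fintype (X i)] [∀ j, Fintype (Y j)]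
    (S : (∀ i, X i) → F) (T : (∀ j, Y j) → F) : Prop :=
  ∃ s : (Σ j, Y j) → F ⊕ (Σ i, X i),
    (∀ (j : κ) (y y' : Y j) (p p' : Σ i, X i),
        s ⟨j, y⟩ = Sum.inr p → s ⟨j, y'⟩ = Sum.inr p' → p.1 = p'.1) ∧
    toPoly S = MvPolynomial.aeval
      (fun q => Sum.elim (fun c => (MvPolynomial.C c : MvPolynomial (Σ i, X i) F))
        (fun p => MvPolynomial.X p) (s q)) (toPoly T)

/-- The complete graph `K_d` on the vertex set `{1,…,d}`: one edge per unordered pair of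
distinct vertices. -/
def completeMG (d : ℕ) : Multigraph (Fin d) where
  E := {p : Fin d × Fin d // p.1 < p.2}
  ends := fun p => s(p.1.1, p.1.2)
  loopless := fun p h => absurd (Sym2.mk_isDiag_iff.mp h) (ne_of_lt p.2)

namespace KronAux

variable {F : Type} [Field F] {d n : ℕ}

/-- Encoding of a pair of indices in `Fin n` as a single index in `Fin (n^2)`. -/
noncomputable def pe (n : ℕ) : Fin n × Fin n ≃ Fin (n ^ 2) :=
  finProdFinEquiv.trans (finCongr (pow_two n).symm)

/-- The other endpoint of an edge incident with `v`. -/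
def other (v : Fin d) (e : (completeMG d).Inc v) : Fin d :=
  if e.1.1.1 = v then e.1.1.2 else e.1.1.1

/-- The component of the edge label at the position of `v`. -/
noncomputable def vcomp (v : Fin d) (e : (completeMG d).Inc v)
    (g : (completeMG d).Inc v → Fin (n ^ 2)) : Fin n :=
  if e.1.1.1 = v then ((pe n).symm (g e)).1 else ((pe n).symm (g e)).2

/-- The component of the edge label at the position of the other endpoint. -/
noncomputable def ocomp (v : Fin d) (e : (completeMG d).Inc v)
    (g : (completeMG d).Inc v → Fin (n ^ 2)) : Fin n :=
  if e.1.1.1 = v then ((pe n).symm (g e)).2 else ((pe n).symm (g e)).1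

/-- The edge between `u` and `v`, as an element of `Inc v`. -/
noncomputable def incE (v u : Fin d) (h : u ≠ v) : (completeMG d).Inc v :=
  if hlt : u < v then
    ⟨⟨(u, v), hlt⟩, Sym2.mem_iff.mpr (Or.inr rfl)⟩
  else
    ⟨⟨(v, u), lt_of_le_of_ne (not_lt.mp hlt) h.symm⟩, Sym2.mem_iff.mpr (Or.inl rfl)⟩

noncomputable def cvec (v : Fin d) (g : (completeMG d).Inc v → Fin (n ^ 2))
    (h : Fin d → Fin n) : Fin d → Fin n :=
  fun u => if hu : u = v then h v else ocomp v (incE v u hu) g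

noncomputable def Mmat (T : (Fin d → Fin n) → F) (v : Fin d)
    (g : (completeMG d).Inc v → Fin (n ^ 2)) (h : Fin d → Fin n) : F :=
  (if ∀ e : (completeMG d).Inc v, vcomp v e g = h (other v e) then (1 : F) else 0)
    * T (cvec v g h)

noncomputable def f0 (a : Fin d → Fin d → Fin n) : (completeMG d).E → Fin (n ^ 2) :=
  fun e => pe n (a e.1.1 e.1.2, a e.1.2 e.1.1)

lemma inc_cases {v : Fin d} (e : (completeMG d).Inc v) :
    v = e.1.1.1 ∨ v = e.1.1.2 := by
  have h : v ∈ s(e.1.1.1, e.1.1.2) := e.2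
  exact Sym2.mem_iff.mp h

lemma vcomp_f0 (a : Fin d → Fin d → Fin n) (v : Fin d) (e : (completeMG d).Inc v) :
    vcomp v e (fun e' => f0 a e'.1) = a v (other v e) := by
  have hne : e.1.1.1 ≠ e.1.1.2 := ne_of_lt e.1.2
  rcases inc_cases e with h | h
  · simp [vcomp, other, f0, ← h]
  · have h1 : e.1.1.1 ≠ v := fun hc => hne (hc.trans h)
    simp [vcomp, other, f0, h1, ← h]

lemma cvec_f0 (a : Fin d → Fin d → Fin n) (v : Fin d) :
    cvec v (fun e' => f0 a e'.1) (a v) = fun u => a u v := by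
  funext u
  by_cases hu : u = v
  · simp [cvec, hu]
  · simp only [cvec, dif_neg hu]
    unfold incE
    by_cases hlt : u < v
    · have : ((⟨⟨(u, v), hlt⟩, Sym2.mem_iff.mpr (Or.inr rfl)⟩ :
        (completeMG d).Inc v)).1.1.1 = u := rfl
      have e1 : incE v u hu = ⟨⟨(u, v), hlt⟩, Sym2.mem_iff.mpr (Or.inr rfl)⟩ := dif_pos hlt
      change ocomp v (incE v u hu) _ = _
      rw [e1]
      simp [ocomp, dif_pos hlt, f0, hu]
    · have e1 : incE v u hu = ⟨⟨(v, u), lt_of_le_of_ne (not_lt.mp hlt) (Ne.symm hu)⟩,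
          Sym2.mem_iff.mpr (Or.inl rfl)⟩ := dif_neg hlt
      change ocomp v (incE v u hu) _ = _
      rw [e1]
      simp [ocomp, dif_neg hlt, f0]

lemma prod_f0 (T : (Fin d → Fin n) → F) (a : Fin d → Fin d → Fin n) :
    (∏ v : Fin d, Mmat T v (fun e' => f0 a e'.1) (a v))
      = ∏ s : Fin d, T (fun i => a i s) := by
  refine Finset.prod_congr rfl fun v _ => ?_
  unfold Mmat
  rw [if_pos (fun e => vcomp_f0 a v e), one_mul, cvec_f0]

lemma prod_ne_f0 (T : (Fin d → Fin n) → F) (a : Fin d → Fin d → Fin n)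
    (f : (completeMG d).E → Fin (n ^ 2)) (hf : f ≠ f0 a) :
    (∏ v : Fin d, Mmat T v (fun e' => f e'.1) (a v)) = 0 := by
  obtain ⟨e, he⟩ := Function.ne_iff.mp hf
  have hlt := e.2
  have hne : e.1.1 ≠ e.1.2 := ne_of_lt hlt
  have hpair : (pe n).symm (f e) ≠ (a e.1.1 e.1.2, a e.1.2 e.1.1) := by
    intro hc
    apply he
    have := congrArg (pe n) hc
    simpa [f0] using this
  have hcomp : ((pe n).symm (f e)).1 ≠ a e.1.1 e.1.2 ∨
      ((pe n).symm (f e)).2 ≠ a e.1.2 e.1.1 := by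
    by_contra hc
    push_neg at hc
    exact hpair (Prod.ext hc.1 hc.2)
  rcases hcomp with h | h
  · -- indicator at vertex e.1.1 fails
    refine Finset.prod_eq_zero (Finset.mem_univ e.1.1) ?_
    unfold Mmat
    rw [if_neg, zero_mul]
    intro hall
    have := hall ⟨e, Sym2.mem_iff.mpr (Or.inl rfl)⟩
    unfold vcomp other at this
    simp only [if_pos rfl] at this
    exact h (by simpa using this)
  · refine Finset.prod_eq_zero (Finset.mem_univ e.1.2) ?_
    unfold Mmat
    rw [if_neg, zero_mul]
    intro hall
    have := hall ⟨e, Sym2.mem_iff.mpr (Or.inr rfl)⟩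
    unfold vcomp other at this
    simp only [if_neg hne] at this
    exact h (by simpa using this)

end KronAux

/-- Let `d ≥ 3`, `n ≥ 1` and let `T` be a `d`-mode tensor over `F` with
`n` variables per mode. Then the `d`-th Kronecker power of `T` is a restriction of the
graph tensor of the complete graph `K_d` with length parameter `n²`:
`T^{⊗d} ≤ T_{K_d,n²}`. -/
theorem kronPow_restrict_complete (F : Type) [Field F] (d n : ℕ) (hd : 3 ≤ d)
    (hn : 1 ≤ n) (T : (Fin d → Fin n) → F) :
    Restrict (kronPow T d) (gTensor F (completeMG d) (n ^ 2)) := by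
  classical
  refine ⟨Equiv.refl (Fin d), fun v g h => KronAux.Mmat T v g h, fun a => ?_⟩
  have step1 :
      (∑ b : ∀ v : Fin d, (completeMG d).Inc v → Fin (n ^ 2),
        gTensor F (completeMG d) (n ^ 2) b *
          ∏ v, KronAux.Mmat T v (b v) (a ((Equiv.refl (Fin d)) v)))
      = ∑ f : (completeMG d).E → Fin (n ^ 2),
          ∏ v, KronAux.Mmat T v (fun e => f e.1) (a v) := by
    unfold gTensor
    simp_rw [Finset.sum_mul]
    rw [Finset.sum_comm]
    refine Finset.sum_congr rfl fun f _ => ?_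
    have key : ∀ b : ∀ v : Fin d, (completeMG d).Inc v → Fin (n ^ 2),
        (@ite F (∀ (v : Fin d) (e : (completeMG d).Inc v), b v e = f e.1)
            (propDecidable _) (1:F) 0) *
          ∏ v, KronAux.Mmat T v (b v) (a ((Equiv.refl (Fin d)) v))
        = if (fun (v : Fin d) (e : (completeMG d).Inc v) => f e.1) = b then
            ∏ v, KronAux.Mmat T v (b v) (a v) else 0 := by
      intro b
      by_cases hb : ∀ (v : Fin d) (e : (completeMG d).Inc v), b v e = f e.1
      · have : (fun (v : Fin d) (e : (completeMG d).Inc v) => f e.1) = b := by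
          funext v e; exact (hb v e).symm
        rw [if_pos hb, if_pos this, one_mul]
        rfl
      · have : (fun (v : Fin d) (e : (completeMG d).Inc v) => f e.1) ≠ b := by
          intro hc
          exact hb fun v e => by rw [← hc]
        rw [if_neg hb, if_neg this, zero_mul]
    refine (Finset.sum_congr rfl fun b _ => key b).trans ?_
    rw [Finset.sum_ite_eq]
    simp
  rw [step1, Finset.sum_eq_single (KronAux.f0 a)]
  · exact (KronAux.prod_f0 T a).symm
  · intro f _ hf
    exact KronAux.prod_ne_f0 T a f hf
  · intro h
    exact absurd (Finset.mem_univ _) h
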